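/- arXiv:2303.13350 — 3 statements merged into one kernel-verified Lean document; each statement's English description precedes it below -/
import Mathlib

section
/- Let g be a positive integer, f an integer with 0 ≤ f ≤ g, and w a permutation of {1, …, g} with the property that whenever j' < j and w(j') > w(j), one has w(j) ≤ f < w(j'). Then for every k with 1 ≤ k ≤ g, setting k' = #{ j : 1 ≤ j ≤ k and w(j) > f }, the set { w(j) − f : 1 ≤ j ≤ k, w(j) > f } equals {1, 2, …, k'}. Moreover k' ≤ min(k, g − f). -/
theorem weyl_coset_rep_image (g f : ℕ) (hg : 0 < g) (hf : f ≤ g) (w : ℕ → ℕ)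
    (hbij : Set.BijOn w (Set.Icc 1 g) (Set.Icc 1 g))
    (hw : ∀ j' j, 1 ≤ j' → j' < j → j ≤ g → w j < w j' → w j ≤ f ∧ f < w j') :
    ∀ k, 1 ≤ k → k ≤ g →
      (Finset.image (fun j => w j - f) ((Finset.Icc 1 k).filter (fun j => f < w j)))
        = Finset.Icc 1 (((Finset.Icc 1 k).filter (fun j => f < w j)).card) ∧
      ((Finset.Icc 1 k).filter (fun j => f < w j)).card ≤ min k (g - f) := by
  intro k hk1 hkg
  set S : Finset ℕ := (Finset.Icc 1 k).filter (fun j => f < w j) with hS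
  set I : Finset ℕ := S.image (fun j => w j - f) with hI
  have hSmem : ∀ j ∈ S, 1 ≤ j ∧ j ≤ k ∧ f < w j := by
    intro j hj
    simp only [hS, Finset.mem_filter, Finset.mem_Icc] at hj
    exact ⟨hj.1.1, hj.1.2, hj.2⟩
  have hSIcc : ∀ j ∈ S, j ∈ Set.Icc 1 g := by
    intro j hj
    obtain ⟨h1, h2, _⟩ := hSmem j hj
    exact ⟨h1, le_trans h2 hkg⟩
  have hwle : ∀ j ∈ S, w j ≤ g := by
    intro j hj
    exact (hbij.mapsTo (hSIcc j hj)).2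
  -- injectivity of j ↦ w j - f on S
  have hinj : Set.InjOn (fun j => w j - f) S := by
    intro a ha b hb hab
    simp only [] at hab
    have hab' : w a - f = w b - f := hab
    have hfa := (hSmem a ha).2.2
    have hfb := (hSmem b hb).2.2
    have : w a = w b := by omega
    exact hbij.injOn (hSIcc a ha) (hSIcc b hb) this
  have hcard : I.card = S.card := Finset.card_image_of_injOn hinj
  -- I is contained in Icc 1 S.card
  have hsub : I ⊆ Finset.Icc 1 S.card := by
    intro m hm
    simp only [hI, Finset.mem_image] at hm
    obtain ⟨j, hj, hjm⟩ := hm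
    obtain ⟨hj1, hjk, hjf⟩ := hSmem j hj
    have hm1 : 1 ≤ m := by omega
    -- show Icc 1 m ⊆ I
    have hdown : Finset.Icc 1 m ⊆ I := by
      intro m' hm'
      rw [Finset.mem_Icc] at hm'
      have hval : f + m' ∈ Set.Icc 1 g := by
        have := hwle j hj
        constructor <;> omega
      obtain ⟨j'', hj''g, hj''⟩ := hbij.surjOn hval
      have hj''g1 : 1 ≤ j'' := hj''g.1
      have hj''g2 : j'' ≤ g := hj''g.2
      have hfj'' : f < w j'' := by omega
      have hj''S : j'' ∈ S := by
        by_cases heq : w j'' = w j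
        · have : j'' = j := hbij.injOn hj''g (hSIcc j hj) heq
          rwa [this]
        · have hlt : w j'' < w j := by omega
          have hjj : j'' < j := by
            by_contra h
            have hne : j'' ≠ j := by
              intro hc; rw [hc] at hlt; omega
            have hlt2 : j < j'' := by omega
            have := hw j j'' hj1 hlt2 hj''g2 hlt
            omega
          simp only [hS, Finset.mem_filter, Finset.mem_Icc]
          exact ⟨⟨hj''g1, by omega⟩, hfj''⟩
      simp only [hI, Finset.mem_image]
      refine ⟨j'', hj''S, ?_⟩
      show w j'' - f = m'
      omega
    have : m ≤ I.card := by
      calc m = (Finset.Icc 1 m).card := by rw [Nat.card_Icc]; omega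
        _ ≤ I.card := Finset.card_le_card hdown
    rw [Finset.mem_Icc]
    omega
  have heq : I = Finset.Icc 1 S.card := by
    apply Finset.eq_of_subset_of_card_le hsub
    rw [Nat.card_Icc, hcard]
    omega
  refine ⟨heq, ?_⟩
  have h1 : S.card ≤ k := by
    calc S.card ≤ (Finset.Icc 1 k).card := Finset.card_le_card (Finset.filter_subset _ _)
      _ = k := by rw [Nat.card_Icc]; omega
  have h2 : S.card ≤ g - f := by
    have hsub2 : I ⊆ Finset.Icc 1 (g - f) := by
      intro m hm
      simp only [hI, Finset.mem_image] at hm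
      obtain ⟨j, hj, hjm⟩ := hm
      obtain ⟨_, _, hjf⟩ := hSmem j hj
      have := hwle j hj
      rw [Finset.mem_Icc]
      omega
    calc S.card = I.card := hcard.symm
      _ ≤ (Finset.Icc 1 (g - f)).card := Finset.card_le_card hsub2
      _ = g - f := by rw [Nat.card_Icc]; omega
  omega
end

section
/- Let g be a positive integer and f an integer with 0 ≤ f ≤ g. The permutation w of {1, …, g} defined by w(k) = f + k for 1 ≤ k ≤ g − f and w(k) = k − (g − f) for g − f < k ≤ g has exactly f·(g − f) inversions, i.e. there are exactly f·(g−f) pairs (j', j) with j' < j and w(j') > w(j). Moreover, every permutation of {1,…,g} satisfying the property that whenever j' < j and w(j') > w(j) one has w(j) ≤ f < w(j'), has at most f·(g − f) inversions. -/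
theorem rotation_perm_inversions (g f : ℕ) (hg : 0 < g) (hf : f ≤ g) :
    (∀ w : ℕ → ℕ,
      (∀ k, 1 ≤ k → k ≤ g - f → w k = f + k) →
      (∀ k, g - f < k → k ≤ g → w k = k - (g - f)) →
      (((Finset.Icc 1 g) ×ˢ (Finset.Icc 1 g)).filter
          (fun q => q.1 < q.2 ∧ w q.2 < w q.1)).card = f * (g - f)) ∧
    (∀ w : ℕ → ℕ, Set.BijOn w (Set.Icc 1 g) (Set.Icc 1 g) →
      (∀ j' j, 1 ≤ j' → j' < j → j ≤ g → w j < w j' → w j ≤ f ∧ f < w j') →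
      (((Finset.Icc 1 g) ×ˢ (Finset.Icc 1 g)).filter
          (fun q => q.1 < q.2 ∧ w q.2 < w q.1)).card ≤ f * (g - f)) := by
  constructor
  · intro w h1 h2
    have hset : ((Finset.Icc 1 g) ×ˢ (Finset.Icc 1 g)).filter
          (fun q => q.1 < q.2 ∧ w q.2 < w q.1)
        = (Finset.Icc 1 (g - f)) ×ˢ (Finset.Icc (g - f + 1) g) := by
      ext ⟨a, b⟩
      simp only [Finset.mem_filter, Finset.mem_product, Finset.mem_Icc]
      constructor
      · rintro ⟨⟨⟨ha1, ha2⟩, hb1, hb2⟩, hab, hw⟩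
        by_cases hag : a ≤ g - f
        · by_cases hbg : b ≤ g - f
          · rw [h1 a ha1 hag, h1 b hb1 hbg] at hw; omega
          · exact ⟨⟨ha1, hag⟩, by omega, hb2⟩
        · have hbg : ¬ b ≤ g - f := by omega
          rw [h2 a (by omega) ha2, h2 b (by omega) hb2] at hw; omega
      · rintro ⟨⟨ha1, ha2⟩, hb1, hb2⟩
        have hwa : w a = f + a := h1 a ha1 ha2
        have hwb : w b = b - (g - f) := h2 b (by omega) hb2
        refine ⟨⟨⟨ha1, by omega⟩, by omega, hb2⟩, by omega, by omega⟩
    rw [hset, Finset.card_product, Nat.card_Icc, Nat.card_Icc]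
    have : g + 1 - (g - f + 1) = f := by omega
    rw [this]
    cases Nat.eq_or_lt_of_le hf with
    | inl h => simp [h]
    | inr _ => rw [Nat.succ_sub_one]; ring
  · intro w hbij hcond
    have key : (((Finset.Icc 1 g) ×ˢ (Finset.Icc 1 g)).filter
          (fun q => q.1 < q.2 ∧ w q.2 < w q.1)).card
        ≤ ((Finset.Icc (f + 1) g) ×ˢ (Finset.Icc 1 f)).card := by
      apply Finset.card_le_card_of_injOn (fun q => (w q.1, w q.2))
      · rintro ⟨a, b⟩ hq
        simp only [Finset.mem_coe, Finset.mem_filter, Finset.mem_product, Finset.mem_Icc] at hq ⊢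
        obtain ⟨⟨⟨ha1, ha2⟩, hb1, hb2⟩, hab, hw⟩ := hq
        obtain ⟨hwb, hwa⟩ := hcond a b ha1 hab hb2 hw
        have h1 : w a ∈ Set.Icc 1 g := hbij.mapsTo ⟨ha1, ha2⟩
        have h2 : w b ∈ Set.Icc 1 g := hbij.mapsTo ⟨hb1, hb2⟩
        simp only [Set.mem_Icc] at h1 h2
        exact ⟨⟨by omega, h1.2⟩, h2.1, hwb⟩
      · rintro ⟨a, b⟩ hq ⟨a', b'⟩ hq' heq
        simp only [Finset.coe_filter, Set.mem_setOf_eq, Finset.mem_product,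
          Finset.mem_Icc] at hq hq'
        simp only [Prod.mk.injEq] at heq
        have ea := hbij.injOn (Set.mem_Icc.mpr ⟨hq.1.1.1, hq.1.1.2⟩)
          (Set.mem_Icc.mpr ⟨hq'.1.1.1, hq'.1.1.2⟩) heq.1
        have eb := hbij.injOn (Set.mem_Icc.mpr ⟨hq.1.2.1, hq.1.2.2⟩)
          (Set.mem_Icc.mpr ⟨hq'.1.2.1, hq'.1.2.2⟩) heq.2
        exact Prod.ext ea eb
    refine key.trans ?_
    rw [Finset.card_product, Nat.card_Icc, Nat.card_Icc]
    have h1 : g + 1 - (f + 1) = g - f := by omega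
    have h2 : f + 1 - 1 = f := by omega
    rw [h1, h2, Nat.mul_comm]
end

section
/- Let K be a field, g a positive integer, f an integer with 0 ≤ f ≤ g, and w a permutation of {1, …, g} satisfying: whenever j' < j and w(j') > w(j), one has w(j) ≤ f < w(j'). Let V and W be K-vector spaces with bases e_1, …, e_g and e'_1, …, e'_g respectively, and define the linear map F : V → W by F(e_j) = e'_{w(j) − f} if w(j) > f and F(e_j) = 0 if w(j) ≤ f. Then for every 1 ≤ k ≤ g, the image F(span(e_1,…,e_k)) equals span(e'_1, …, e'_l) where l = dim F(span(e_1,…,e_k)), and l ≤ min(k, g − f). If moreover w(k) = f + k for all k ≤ g − f, then l = min(k, g − f). -/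
theorem frobenius_image_of_filtration (K : Type*) [Field K]
    (g f : ℕ) (hg : 0 < g) (hf : f ≤ g)
    (w : Equiv.Perm (Fin g))
    (hw : ∀ j' j : Fin g, j' < j → w j < w j' → ((w j : ℕ) < f ∧ f ≤ (w j' : ℕ)))
    (V W : Type*) [AddCommGroup V] [Module K V] [AddCommGroup W] [Module K W]
    (e : Module.Basis (Fin g) K V) (e' : Module.Basis (Fin g) K W)
    (F : V →ₗ[K] W)
    (hF : ∀ j : Fin g, F (e j) =
      if h : f ≤ (w j : ℕ) then
        e' ⟨(w j : ℕ) - f, by have := (w j).isLt; omega⟩ else 0) :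
    ∀ k : ℕ, 1 ≤ k → k ≤ g →
      (Submodule.map F (Submodule.span K (e '' {j : Fin g | (j : ℕ) < k}))
          = Submodule.span K (e' '' {j : Fin g | (j : ℕ) <
              Module.finrank K (Submodule.map F
                (Submodule.span K (e '' {j : Fin g | (j : ℕ) < k})))}) ∧
        Module.finrank K (Submodule.map F
            (Submodule.span K (e '' {j : Fin g | (j : ℕ) < k}))) ≤ min k (g - f)) ∧
      ((∀ j : Fin g, (j : ℕ) < g - f → (w j : ℕ) = f + (j : ℕ)) →
        Module.finrank K (Submodule.map F
            (Submodule.span K (e '' {j : Fin g | (j : ℕ) < k}))) = min k (g - f)) := by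
  intro k hk1 hkg
  -- the set of indices in the image
  set S : Finset (Fin g) :=
    Finset.univ.filter (fun j : Fin g => (j : ℕ) < k ∧ f ≤ (w j : ℕ)) with hS
  set T : Finset ℕ := S.image (fun j : Fin g => (w j : ℕ) - f) with hT
  have hmemT : ∀ n : ℕ, n ∈ T ↔ ∃ j : Fin g, ((j : ℕ) < k ∧ f ≤ (w j : ℕ)) ∧
      (w j : ℕ) - f = n := by
    intro n
    simp [hT, hS, Finset.mem_image, Finset.mem_filter]
  -- T is downward closed
  have hdc : ∀ m ∈ T, ∀ m' < m, m' ∈ T := by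
    intro m hm m' hm'
    obtain ⟨j, ⟨hjk, hjf⟩, hjm⟩ := (hmemT m).1 hm
    have hwjlt : (w j : ℕ) < g := (w j).isLt
    have hwjval : (w j : ℕ) = f + m := by omega
    have hi' : f + m' < g := by omega
    set i' : Fin g := ⟨f + m', hi'⟩ with hi'def
    set j'' : Fin g := w.symm i' with hj''
    have hwj'' : w j'' = i' := w.apply_symm_apply i'
    have hne : j'' ≠ j := by
      intro h
      rw [h] at hwj''
      have : (w j : ℕ) = f + m' := by rw [hwj'']
      omega
    have hlt : j'' < j := by
      by_contra h
      push_neg at h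
      have h2 : j < j'' := lt_of_le_of_ne h (Ne.symm hne)
      have h3 : w j'' < w j := by
        rw [Fin.lt_iff_val_lt_val, hwj'']
        simpa [hi'def, hwjval] using hm'
      have := (hw j j'' h2 h3).1
      rw [hwj''] at this
      simp [hi'def] at this
    refine (hmemT m').2 ⟨j'', ⟨?_, ?_⟩, ?_⟩
    · have : (j'' : ℕ) < (j : ℕ) := hlt
      omega
    · rw [hwj'']; simp [hi'def]
    · rw [hwj'']; simp [hi'def]
  -- T is an initial segment
  have hrange : T = Finset.range T.card := by
    ext n
    simp only [Finset.mem_range]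
    constructor
    · intro hn
      have hsub : Finset.range (n + 1) ⊆ T := by
        intro m hm
        simp only [Finset.mem_range] at hm
        rcases Nat.lt_or_ge m n with h | h
        · exact hdc n hn m h
        · have : m = n := by omega
          rwa [this]
      have := Finset.card_le_card hsub
      simpa using this
    · intro hn
      by_contra hnT
      have hsub : T ⊆ Finset.range n := by
        intro m hm
        simp only [Finset.mem_range]
        by_contra h
        push_neg at h
        rcases Nat.lt_or_ge n m with h2 | h2
        · exact hnT (hdc m hm n h2)
        · have : n = m := by omega
          rw [this] at hnT; exact hnT hm
      have := Finset.card_le_card hsub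
      simp at this
      omega
  set l : ℕ := T.card with hl
  -- bounds on l
  have hTsub : T ⊆ Finset.range (g - f) := by
    intro n hn
    obtain ⟨j, ⟨hjk, hjf⟩, hjm⟩ := (hmemT n).1 hn
    have := (w j).isLt
    simp only [Finset.mem_range]
    omega
  have hlgf : l ≤ g - f := by
    have := Finset.card_le_card hTsub
    simpa using this
  have hlk : l ≤ k := by
    have h1 : S.card ≤ k := by
      have := Finset.card_le_card_of_injOn (s := S) (t := Finset.range k) (fun j : Fin g => (j : ℕ))
        (fun j hj => by
          have hj' : (j : ℕ) < k ∧ f ≤ (w j : ℕ) := by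
            simpa [hS] using hj
          simp [Finset.mem_range, hj'.1])
        (fun a _ b _ h => Fin.ext h)
      simpa using this
    calc l ≤ S.card := Finset.card_image_le
      _ ≤ k := h1
  have hlg : l ≤ g := by omega
  -- the image computation
  have himg : Submodule.map F (Submodule.span K (e '' {j : Fin g | (j : ℕ) < k}))
      = Submodule.span K (e' '' {i : Fin g | (i : ℕ) ∈ T}) := by
    apply le_antisymm
    · rw [Submodule.map_span, Submodule.span_le]
      rintro x ⟨v, ⟨j, hj, rfl⟩, rfl⟩
      simp only [Set.mem_setOf_eq] at hj
      rw [hF j]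
      split_ifs with h
      · apply Submodule.subset_span
        refine ⟨_, ?_, rfl⟩
        simp only [Set.mem_setOf_eq]
        exact (hmemT _).2 ⟨j, ⟨hj, h⟩, rfl⟩
      · exact Submodule.zero_mem _
    · rw [Submodule.span_le]
      rintro x ⟨i, hi, rfl⟩
      simp only [Set.mem_setOf_eq] at hi
      obtain ⟨j, ⟨hjk, hjf⟩, hjm⟩ := (hmemT _).1 hi
      have hFe : F (e j) = e' i := by
        rw [hF j, dif_pos hjf]
        congr 1
        exact Fin.ext hjm
      rw [← hFe]
      exact Submodule.mem_map_of_mem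
        (Submodule.subset_span ⟨j, by simpa using hjk, rfl⟩)
  have hsetT : {i : Fin g | (i : ℕ) ∈ T} = {i : Fin g | (i : ℕ) < l} := by
    ext i
    simp only [Set.mem_setOf_eq]
    rw [hrange, Finset.mem_range]
  rw [hsetT] at himg
  -- finrank of span of initial segment of basis
  have hfr : Module.finrank K
      (Submodule.span K (e' '' {i : Fin g | (i : ℕ) < l})) = l := by
    have hinj : Function.Injective (fun i : Fin l => (⟨(i : ℕ), by omega⟩ : Fin g)) := by
      intro a b hab
      have : (a : ℕ) = (b : ℕ) := by simpa [Fin.ext_iff] using hab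
      exact Fin.ext this
    have hli : LinearIndependent K (fun i : Fin l => e' ⟨(i : ℕ), by omega⟩) :=
      e'.linearIndependent.comp _ hinj
    have hset : e' '' {i : Fin g | (i : ℕ) < l}
        = Set.range (fun i : Fin l => e' ⟨(i : ℕ), by omega⟩) := by
      ext x
      constructor
      · rintro ⟨i, hi, rfl⟩
        simp only [Set.mem_setOf_eq] at hi
        exact ⟨⟨(i : ℕ), hi⟩, by congr 1⟩
      · rintro ⟨i, rfl⟩
        exact ⟨⟨(i : ℕ), by omega⟩, by simp [i.isLt], rfl⟩
    rw [hset]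
    rw [finrank_span_eq_card hli]
    simp
  have hfin : Module.finrank K (Submodule.map F
      (Submodule.span K (e '' {j : Fin g | (j : ℕ) < k}))) = l := by
    rw [himg, hfr]
  refine ⟨⟨?_, ?_⟩, ?_⟩
  · rw [hfin, himg]
  · rw [hfin]; omega
  · intro hord
    rw [hfin]
    have hge : min k (g - f) ≤ l := by
      have hsub : Finset.range (min k (g - f)) ⊆ T := by
        intro n hn
        simp only [Finset.mem_range, lt_min_iff] at hn
        have hng : n < g := by omega
        refine (hmemT n).2 ⟨⟨n, hng⟩, ⟨?_, ?_⟩, ?_⟩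
        · exact hn.1
        · rw [hord ⟨n, hng⟩ (by simpa using hn.2)]; simp only [Fin.val_mk]; omega
        · rw [hord ⟨n, hng⟩ (by simpa using hn.2)]; simp only [Fin.val_mk]; omega
      have := Finset.card_le_card hsub
      simpa using this
    omega
end
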